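/- Let X be a self-adjoint operator on a finite-dimensional complex Hilbert space and φ a state on End(H). Then for all t ∈ ℝ, φ(exp(tX)) = exp(φ(X)t + (φ(X²) - φ(X)²)t²/2 + r(t)) where the remainder satisfies |r(t)| ≤ (4/3)‖X‖_op³ t³ for t ≥ 0. In particular, if φ(X) = 0 then lim_{n→∞} φ(exp(X/√n))^n = exp(φ(X²)/2). -/

import Mathlib

open Filter Topology
open scoped ComplexOrder InnerProductSpace

section Analysis
open Set

lemma le_of_deriv_le {f g f' g' : ℝ → ℝ}
    (hf : ∀ u, HasDerivAt f (f' u) u) (hg : ∀ u, HasDerivAt g (g' u) u)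
    (h0 : f 0 ≤ g 0) (hle : ∀ u, 0 ≤ u → f' u ≤ g' u) :
    ∀ t, 0 ≤ t → f t ≤ g t := by
  intro t ht
  have hmono : MonotoneOn (fun u => g u - f u) (Ici (0:ℝ)) := by
    apply monotoneOn_of_deriv_nonneg (convex_Ici 0)
    · have hgc : Continuous g := continuous_iff_continuousAt.mpr fun u => (hg u).continuousAt
      have hfc : Continuous f := continuous_iff_continuousAt.mpr fun u => (hf u).continuousAt
      exact (hgc.sub hfc).continuousOn
    · intro u hu
      exact ((hg u).sub (hf u)).differentiableAt.differentiableWithinAt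
    · intro u hu
      rw [interior_Ici] at hu
      rw [((hg u).fun_sub (hf u)).deriv]
      linarith [hle u (le_of_lt hu)]
  have h2 := hmono (self_mem_Ici) (mem_Ici.mpr ht) ht
  simp only at h2
  linarith

lemma alg_g2 (F0 F1 F2 : ℝ) (h : F0 ≠ 0) :
    F2 / F0 - (F1 / F0) ^ 2 = (F2 * F0 - F1 * F1) / F0 ^ 2 := by
  field_simp

lemma alg_g3 (F0 F1 F2 F3 : ℝ) (h : F0 ≠ 0) :
    F3 / F0 - 3 * (F2 * F1) / F0 ^ 2 + 2 * (F1 / F0) ^ 3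
      = (F3 * F0 - F2 * F1) / F0 ^ 2 - 2 * (F1 / F0) * (F2 / F0 - (F1 / F0) ^ 2) := by
  field_simp; ring

lemma alg_key (F0 F1 F2 F3 : ℝ) (h : F0 ≠ 0) :
    F3 / F0 - 3 * (F2 * F1) / F0 ^ 2 + 2 * (F1 / F0) ^ 3
      = F3 / F0 - 3 * (F1 / F0) * (F2 / F0) + 3 * (F1 / F0) ^ 2 * (F1 / F0)
        - (F1 / F0) ^ 3 * 1 := by
  field_simp; ring

lemma mgf_taylor {N : ℕ} (p lam : Fin N → ℝ) (L : ℝ)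
    (hp : ∀ i, 0 ≤ p i) (hsum : ∑ i, p i = 1) (hlam : ∀ i, |lam i| ≤ L) :
    ∀ t : ℝ, 0 ≤ t →
      |Real.log (∑ i, p i * Real.exp (t * lam i)) - (∑ i, p i * lam i) * t -
        ((∑ i, p i * lam i ^ 2) - (∑ i, p i * lam i) ^ 2) * t ^ 2 / 2|
        ≤ (4 / 3) * L ^ 3 * t ^ 3 := by
  have hL : 0 ≤ L := by
    rcases Nat.eq_zero_or_pos N with h0 | h0
    · exfalso; subst h0; simp at hsum
    · exact le_trans (abs_nonneg _) (hlam ⟨0, h0⟩)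
  set Fk : ℕ → ℝ → ℝ := fun k u => ∑ i, p i * lam i ^ k * Real.exp (u * lam i) with hFk
  have hFpos : ∀ u, 0 < Fk 0 u := by
    intro u
    have hex : ∃ i, 0 < p i := by
      by_contra hcon
      push_neg at hcon
      have : (∑ i, p i) ≤ 0 := Finset.sum_nonpos fun i _ => hcon i
      linarith
    obtain ⟨i0, hi0⟩ := hex
    refine Finset.sum_pos' (fun i _ => ?_) ⟨i0, Finset.mem_univ _, ?_⟩
    · have h1 : p i * lam i ^ 0 * Real.exp (u * lam i) = p i * Real.exp (u * lam i) := by simp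
      rw [h1]; exact mul_nonneg (hp i) (Real.exp_pos _).le
    · have h1 : p i0 * lam i0 ^ 0 * Real.exp (u * lam i0) = p i0 * Real.exp (u * lam i0) := by
        simp
      rw [h1]; exact mul_pos hi0 (Real.exp_pos _)
  have hFne : ∀ u, Fk 0 u ≠ 0 := fun u => ne_of_gt (hFpos u)
  have hFk_deriv : ∀ k u, HasDerivAt (Fk k) (Fk (k+1) u) u := by
    intro k u
    apply HasDerivAt.fun_sum
    intro i _
    have h1 : HasDerivAt (fun u => Real.exp (u * lam i)) (Real.exp (u * lam i) * lam i) u := by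
      simpa using (((hasDerivAt_id u).mul_const (lam i)).exp)
    have := h1.const_mul (p i * lam i ^ k)
    refine this.congr_deriv ?_
    ring
  set g1 : ℝ → ℝ := fun u => Fk 1 u / Fk 0 u with hg1def
  set g2 : ℝ → ℝ := fun u => Fk 2 u / Fk 0 u - (Fk 1 u / Fk 0 u) ^ 2 with hg2def
  set g3 : ℝ → ℝ := fun u =>
    Fk 3 u / Fk 0 u - 3 * (Fk 2 u * Fk 1 u) / (Fk 0 u) ^ 2 + 2 * (Fk 1 u / Fk 0 u) ^ 3 with hg3def
  have hψ : ∀ u, HasDerivAt (fun u => Real.log (Fk 0 u)) (g1 u) u := by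
    intro u
    have := (hFk_deriv 0 u).log (hFne u)
    simpa [hg1def] using this
  have hg1 : ∀ u, HasDerivAt g1 (g2 u) u := by
    intro u
    have := (hFk_deriv 1 u).fun_div (hFk_deriv 0 u) (hFne u)
    refine this.congr_deriv (Eq.symm ?_)
    show Fk 2 u / Fk 0 u - (Fk 1 u / Fk 0 u) ^ 2
      = (Fk (1+1) u * Fk 0 u - Fk 1 u * Fk (0+1) u) / Fk 0 u ^ 2
    norm_num
    exact alg_g2 (Fk 0 u) (Fk 1 u) (Fk 2 u) (hFne u)
  have hg2 : ∀ u, HasDerivAt g2 (g3 u) u := by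
    intro u
    have h1 := (hFk_deriv 2 u).fun_div (hFk_deriv 0 u) (hFne u)
    have h2 := (hg1 u).fun_pow 2
    have := h1.fun_sub h2
    refine this.congr_deriv (Eq.symm ?_)
    show Fk 3 u / Fk 0 u - 3 * (Fk 2 u * Fk 1 u) / Fk 0 u ^ 2 + 2 * (Fk 1 u / Fk 0 u) ^ 3
      = (Fk (2+1) u * Fk 0 u - Fk 2 u * Fk (0+1) u) / Fk 0 u ^ 2
        - (2:ℕ) * (Fk 1 u / Fk 0 u) ^ (2-1) * (Fk 2 u / Fk 0 u - (Fk 1 u / Fk 0 u) ^ 2)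
    norm_num
    exact alg_g3 (Fk 0 u) (Fk 1 u) (Fk 2 u) (Fk 3 u) (hFne u)
  have hg3_bound : ∀ u, |g3 u| ≤ 8 * L ^ 3 := by
    intro u
    set G := Fk 0 u with hG
    set μ := Fk 1 u / G with hμ
    set q : Fin N → ℝ := fun i => p i * Real.exp (u * lam i) / G with hq
    have hqn : ∀ i, 0 ≤ q i := fun i =>
      div_nonneg (mul_nonneg (hp i) (Real.exp_nonneg _)) (le_of_lt (hFpos u))
    have hqsum : ∑ i, q i = 1 := by
      have hcg : ∀ i ∈ Finset.univ, q i = (p i * Real.exp (u * lam i)) / G := fun i _ => rfl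
      rw [Finset.sum_congr rfl hcg, ← Finset.sum_div, div_eq_one_iff_eq (hFne u)]
      simp [hFk, hG]
    have hMk : ∀ k : ℕ, ∑ i, q i * lam i ^ k = Fk k u / G := by
      intro k
      have hcg : ∀ i ∈ Finset.univ, q i * lam i ^ k
          = (p i * lam i ^ k * Real.exp (u * lam i)) / G := by
        intro i _
        rw [hq]
        ring
      rw [Finset.sum_congr rfl hcg, ← Finset.sum_div]
    have key : g3 u = ∑ i, q i * (lam i - μ) ^ 3 := by
      have expand : ∑ i, q i * (lam i - μ) ^ 3 =
          (∑ i, q i * lam i ^ 3) - 3 * μ * (∑ i, q i * lam i ^ 2)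
            + 3 * μ ^ 2 * (∑ i, q i * lam i ^ 1) - μ ^ 3 * (∑ i, q i) := by
        rw [Finset.mul_sum, Finset.mul_sum, Finset.mul_sum]
        rw [← Finset.sum_sub_distrib, ← Finset.sum_add_distrib, ← Finset.sum_sub_distrib]
        apply Finset.sum_congr rfl
        intro i _
        ring
      rw [expand, hMk, hMk, hMk, hqsum]
      show Fk 3 u / Fk 0 u - 3 * (Fk 2 u * Fk 1 u) / Fk 0 u ^ 2 + 2 * (Fk 1 u / Fk 0 u) ^ 3
        = Fk 3 u / (Fk 0 u) - 3 * (Fk 1 u / Fk 0 u) * (Fk 2 u / Fk 0 u)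
          + 3 * (Fk 1 u / Fk 0 u) ^ 2 * (Fk 1 u / Fk 0 u) - (Fk 1 u / Fk 0 u) ^ 3 * 1
      exact alg_key (Fk 0 u) (Fk 1 u) (Fk 2 u) (Fk 3 u) (hFne u)
    have hμle : |μ| ≤ L := by
      have : μ = ∑ i, q i * lam i := by
        have := hMk 1
        simpa using this.symm
      rw [this]
      calc |∑ i, q i * lam i| ≤ ∑ i, |q i * lam i| := Finset.abs_sum_le_sum_abs _ _
        _ ≤ ∑ i, q i * L := by
            apply Finset.sum_le_sum
            intro i _
            rw [abs_mul, abs_of_nonneg (hqn i)]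
            exact mul_le_mul_of_nonneg_left (hlam i) (hqn i)
        _ = L := by rw [← Finset.sum_mul, hqsum, one_mul]
    rw [key]
    calc |∑ i, q i * (lam i - μ) ^ 3| ≤ ∑ i, |q i * (lam i - μ) ^ 3| :=
          Finset.abs_sum_le_sum_abs _ _
      _ ≤ ∑ i, q i * (2 * L) ^ 3 := by
          apply Finset.sum_le_sum
          intro i _
          rw [abs_mul, abs_of_nonneg (hqn i)]
          apply mul_le_mul_of_nonneg_left _ (hqn i)
          rw [abs_pow]
          apply pow_le_pow_left₀ (abs_nonneg _)
          have := hlam i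
          have h1 := abs_sub (lam i) μ
          calc |lam i - μ| ≤ |lam i| + |μ| := abs_sub _ _
            _ ≤ 2 * L := by linarith [hμle]
      _ = (2 * L) ^ 3 := by rw [← Finset.sum_mul, hqsum, one_mul]
      _ = 8 * L ^ 3 := by ring
  -- initial values
  set a : ℝ := ∑ i, p i * lam i with ha
  set m2 : ℝ := ∑ i, p i * lam i ^ 2 with hm2
  set b : ℝ := m2 - a ^ 2 with hb
  have hF00 : Fk 0 0 = 1 := by simp [hFk, hsum]
  have hF10 : Fk 1 0 = a := by simp [hFk, ha]
  have hF20 : Fk 2 0 = m2 := by simp [hFk, hm2]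
  have hg10 : g1 0 = a := by simp [hg1def, hF00, hF10]
  have hg20 : g2 0 = b := by simp [hg2def, hF00, hF10, hF20, hb]
  -- Step A : |g2 u - b| ≤ 8 L^3 u for u ≥ 0
  have stepA : ∀ u, 0 ≤ u → |g2 u - b| ≤ 8 * L ^ 3 * u := by
    have hMd : ∀ u : ℝ, HasDerivAt (fun u : ℝ => 8 * L ^ 3 * u) (8 * L ^ 3) u := by
      intro u
      simpa using (hasDerivAt_id u).const_mul (8 * L ^ 3)
    have h1 : ∀ u, 0 ≤ u → g2 u - b ≤ 8 * L ^ 3 * u := by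
      apply le_of_deriv_le (fun u => (hg2 u).sub_const b) hMd (by simp [hg20])
      intro u _
      exact le_of_abs_le (hg3_bound u)
    have h2 : ∀ u, 0 ≤ u → -(g2 u - b) ≤ 8 * L ^ 3 * u := by
      apply le_of_deriv_le (fun u => ((hg2 u).sub_const b).neg) hMd (by simp [hg20])
      intro u _
      have := neg_abs_le (g3 u)
      linarith [hg3_bound u]
    intro u hu
    exact abs_le.mpr ⟨by linarith [h2 u hu], h1 u hu⟩
  -- Step B : |g1 u - a - b u| ≤ 4 L^3 u^2
  have stepB : ∀ u, 0 ≤ u → |g1 u - a - b * u| ≤ 4 * L ^ 3 * u ^ 2 := by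
    have hfd : ∀ u : ℝ, HasDerivAt (fun u => g1 u - a - b * u) (g2 u - b) u := by
      intro u
      have := ((hg1 u).sub_const a).fun_sub ((hasDerivAt_id u).const_mul b)
      refine this.congr_deriv ?_
      ring
    have hMd : ∀ u : ℝ, HasDerivAt (fun u : ℝ => 4 * L ^ 3 * u ^ 2) (8 * L ^ 3 * u) u := by
      intro u
      have := (hasDerivAt_pow 2 u).const_mul (4 * L ^ 3)
      refine this.congr_deriv ?_
      ring
    have h1 : ∀ u, 0 ≤ u → g1 u - a - b * u ≤ 4 * L ^ 3 * u ^ 2 := by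
      apply le_of_deriv_le hfd hMd (by simp [hg10])
      intro u hu
      have := stepA u hu
      have := le_of_abs_le this
      linarith
    have h2 : ∀ u, 0 ≤ u → -(g1 u - a - b * u) ≤ 4 * L ^ 3 * u ^ 2 := by
      apply le_of_deriv_le (fun u => (hfd u).neg) hMd (by simp [hg10])
      intro u hu
      have h := stepA u hu
      have := neg_abs_le (g2 u - b)
      linarith
    intro u hu
    exact abs_le.mpr ⟨by linarith [h2 u hu], h1 u hu⟩
  -- Step C
  intro t ht
  have hψ0 : Real.log (Fk 0 0) = 0 := by rw [hF00, Real.log_one]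
  have hfd : ∀ u : ℝ, HasDerivAt (fun u => Real.log (Fk 0 u) - a * u - b * u ^ 2 / 2)
      (g1 u - a - b * u) u := by
    intro u
    have h1 := (hψ u).fun_sub ((hasDerivAt_id u).const_mul a)
    have h2 := (hasDerivAt_pow 2 u).const_mul b
    have := h1.fun_sub (h2.div_const 2)
    refine this.congr_deriv ?_
    ring
  have hMd : ∀ u : ℝ, HasDerivAt (fun u : ℝ => 4 / 3 * L ^ 3 * u ^ 3) (4 * L ^ 3 * u ^ 2) u := by
    intro u
    have := (hasDerivAt_pow 3 u).const_mul (4 / 3 * L ^ 3)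
    refine this.congr_deriv ?_
    ring
  have h1 : ∀ u, 0 ≤ u → Real.log (Fk 0 u) - a * u - b * u ^ 2 / 2 ≤ 4 / 3 * L ^ 3 * u ^ 3 := by
    apply le_of_deriv_le hfd hMd (by simp [hψ0])
    intro u hu
    exact le_of_abs_le (stepB u hu)
  have h2 : ∀ u, 0 ≤ u → -(Real.log (Fk 0 u) - a * u - b * u ^ 2 / 2) ≤ 4 / 3 * L ^ 3 * u ^ 3 := by
    apply le_of_deriv_le (fun u => (hfd u).neg) hMd (by simp [hψ0])
    intro u hu
    have := neg_abs_le (g1 u - a - b * u)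
    linarith [stepB u hu]
  have hfinal := abs_le.mpr ⟨by linarith [h2 t ht], h1 t ht⟩
  have hFeq : Fk 0 t = ∑ i, p i * Real.exp (t * lam i) := by simp [hFk]
  calc |Real.log (∑ i, p i * Real.exp (t * lam i)) - a * t - (m2 - a ^ 2) * t ^ 2 / 2|
      = |Real.log (Fk 0 t) - a * t - b * t ^ 2 / 2| := by rw [hFeq, hb]
    _ ≤ 4 / 3 * L ^ 3 * t ^ 3 := hfinal

end Analysis

section OpHelpers
variable {H : Type*} [NormedAddCommGroup H] [InnerProductSpace ℂ H] [FiniteDimensional ℂ H]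

noncomputable def proj {N : ℕ} (e : OrthonormalBasis (Fin N) ℂ H) (i : Fin N) : H →L[ℂ] H :=
  (innerSL ℂ (e i)).smulRight (e i)

omit [FiniteDimensional ℂ H] in
lemma proj_apply {N : ℕ} (e : OrthonormalBasis (Fin N) ℂ H) (i : Fin N) (x : H) :
    proj e i x = ⟪e i, x⟫_ℂ • e i := rfl

lemma diag_eq {N : ℕ} (e : OrthonormalBasis (Fin N) ℂ H) (A : H →L[ℂ] H) (μ : Fin N → ℂ)
    (h : ∀ i, A (e i) = μ i • e i) : A = ∑ i, μ i • proj e i := by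
  apply ContinuousLinearMap.coe_injective
  apply Module.Basis.ext e.toBasis
  intro j
  simp only [OrthonormalBasis.coe_toBasis, ContinuousLinearMap.coe_coe, h]
  rw [ContinuousLinearMap.coe_sum', Finset.sum_apply]
  rw [Finset.sum_eq_single j]
  · simp [proj_apply, orthonormal_iff_ite.mp e.orthonormal]
  · intro i _ hij
    simp [proj_apply, orthonormal_iff_ite.mp e.orthonormal, hij]
  · simp

lemma star_proj_mul {N : ℕ} (e : OrthonormalBasis (Fin N) ℂ H) (i : Fin N) :
    star (proj e i) * proj e i = proj e i := by
  have hsa : IsSelfAdjoint (proj e i) := by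
    rw [ContinuousLinearMap.isSelfAdjoint_iff_isSymmetric]
    intro x y
    simp [proj_apply, inner_smul_left, inner_smul_right]
    ring
  rw [hsa.star_eq]
  ext x
  simp [ContinuousLinearMap.mul_apply, proj_apply, inner_smul_right,
    orthonormal_iff_ite.mp e.orthonormal, smul_smul]

lemma exp_apply_eigen (A : H →L[ℂ] H) (v : H) (c : ℂ) (h : A v = c • v) :
    NormedSpace.exp A v = Complex.exp c • v := by
  have hpow : ∀ n : ℕ, (A ^ n) v = c ^ n • v := by
    intro n
    induction n with
    | zero => simp
    | succ n ih =>
        rw [pow_succ, pow_succ]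
        simp [ContinuousLinearMap.mul_apply, ih, map_smul, h, smul_smul, mul_comm]
  have hsum := NormedSpace.expSeries_summable' (𝕂 := ℂ) A
  have hmt := (ContinuousLinearMap.apply ℂ H v).map_tsum hsum
  rw [NormedSpace.exp_eq_tsum (𝕂 := ℂ)]
  simp only [ContinuousLinearMap.apply_apply] at hmt
  rw [hmt]
  simp only [ContinuousLinearMap.coe_smul', Pi.smul_apply, hpow, smul_smul]
  rw [Summable.tsum_smul_const ?_]
  · rw [Complex.exp_eq_exp_ℂ, NormedSpace.exp_eq_tsum (𝕂 := ℂ)]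
    simp [smul_eq_mul]
  · simpa [smul_eq_mul] using NormedSpace.expSeries_summable' (𝕂 := ℂ) c

end OpHelpers

/-- Second-order expansion of the moment generating function of a self-adjoint operator with
respect to a state, with a cubic remainder bound, and the resulting central-limit-type limit
when the first moment vanishes. -/
theorem state_mgf_expansion
    {H : Type*} [NormedAddCommGroup H] [InnerProductSpace ℂ H] [FiniteDimensional ℂ H]
    (φ : (H →L[ℂ] H) →ₗ[ℂ] ℂ)
    (hpos : ∀ A : H →L[ℂ] H, 0 ≤ φ (star A * A))
    (hnorm : φ 1 = 1)
    (X : H →L[ℂ] H) (hX : IsSelfAdjoint X) :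
    ∃ r : ℝ → ℂ,
      (∀ t : ℝ, φ (NormedSpace.exp ((t : ℂ) • X)) =
        Complex.exp (φ X * t + (φ (X * X) - (φ X) ^ 2) * t ^ 2 / 2 + r t)) ∧
      (∀ t : ℝ, 0 ≤ t → ‖r t‖ ≤ (4 / 3) * ‖X‖ ^ 3 * t ^ 3) ∧
      (φ X = 0 →
        Tendsto (fun n : ℕ => (φ (NormedSpace.exp ((((Real.sqrt n)⁻¹ : ℝ) : ℂ) • X))) ^ n)
          atTop (𝓝 (Complex.exp (φ (X * X) / 2)))) := by
  rcases subsingleton_or_nontrivial H with hs | hnt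
  · exfalso
    have h1 : (1 : H →L[ℂ] H) = 0 := by
      ext x
      exact Subsingleton.elim _ _
    rw [h1, map_zero] at hnorm
    exact zero_ne_one hnorm
  set N := Module.finrank ℂ H with hNdef
  have hN : Module.finrank ℂ H = N := rfl
  have hsym : (X : H →ₗ[ℂ] H).IsSymmetric := hX.isSymmetric
  set e := hsym.eigenvectorBasis hN with he
  set lam : Fin N → ℝ := hsym.eigenvalues hN with hlam
  have hXe : ∀ i, X (e i) = (lam i : ℂ) • e i := fun i => hsym.apply_eigenvectorBasis hN i
  -- φ of a diagonal operator
  have hφdiag : ∀ (A : H →L[ℂ] H) (μ : Fin N → ℂ), (∀ i, A (e i) = μ i • e i) →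
      φ A = ∑ i, μ i * φ (proj e i) := by
    intro A μ h
    rw [diag_eq e A μ h, map_sum]
    simp [map_smul, smul_eq_mul]
  -- the weights
  set p : Fin N → ℝ := fun i => (φ (proj e i)).re with hp
  have hpP : ∀ i, φ (proj e i) = (p i : ℂ) := by
    intro i
    have h0 := hpos (proj e i)
    rw [star_proj_mul] at h0
    rw [Complex.le_def] at h0
    exact Complex.ext rfl h0.2.symm
  have hpnn : ∀ i, 0 ≤ p i := by
    intro i
    have h0 := hpos (proj e i)
    rw [star_proj_mul, Complex.le_def] at h0
    simpa using h0.1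
  have hsum1 : ∑ i, p i = 1 := by
    have h1 : φ 1 = ∑ i, (1 : ℂ) * φ (proj e i) := by
      apply hφdiag
      intro i
      simp
    rw [hnorm] at h1
    have : (1 : ℂ) = ((∑ i, p i : ℝ) : ℂ) := by
      rw [h1]
      push_cast
      exact Finset.sum_congr rfl fun i _ => by rw [hpP i, one_mul]
    exact_mod_cast this.symm
  set a : ℝ := ∑ i, p i * lam i with ha
  set m2 : ℝ := ∑ i, p i * lam i ^ 2 with hm2
  set b : ℝ := m2 - a ^ 2 with hb
  have hφX : φ X = (a : ℂ) := by
    rw [hφdiag X (fun i => (lam i : ℂ)) hXe, ha]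
    push_cast
    exact Finset.sum_congr rfl fun i _ => by rw [hpP i]; push_cast; ring
  have hφX2 : φ (X * X) = (m2 : ℂ) := by
    have hXXe : ∀ i, (X * X) (e i) = ((lam i : ℂ) ^ 2) • e i := by
      intro i
      rw [ContinuousLinearMap.mul_apply, hXe i, map_smul, hXe i, smul_smul]
      ring_nf
    rw [hφdiag (X * X) _ hXXe, hm2]
    push_cast
    exact Finset.sum_congr rfl fun i _ => by rw [hpP i]; push_cast; ring
  have hlamL : ∀ i, |lam i| ≤ ‖X‖ := by
    intro i
    have h1 : ‖X (e i)‖ ≤ ‖X‖ * ‖e i‖ := X.le_opNorm _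
    have h2 : ‖e i‖ = 1 := e.orthonormal.1 i
    have h3 : ‖X (e i)‖ = |lam i| := by
      rw [hXe i, norm_smul, h2, mul_one, Complex.norm_real, Real.norm_eq_abs]
    rw [h3, h2, mul_one] at h1
    exact h1
  -- the mgf as a real function
  set F : ℝ → ℝ := fun t => ∑ i, p i * Real.exp (t * lam i) with hF
  have hFpos : ∀ t, 0 < F t := by
    intro t
    have hex : ∃ i, 0 < p i := by
      by_contra hcon
      push_neg at hcon
      have : (∑ i, p i) ≤ 0 := Finset.sum_nonpos fun i _ => hcon i
      rw [hsum1] at this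
      linarith
    obtain ⟨i0, hi0⟩ := hex
    exact Finset.sum_pos' (fun i _ => mul_nonneg (hpnn i) (Real.exp_pos _).le)
      ⟨i0, Finset.mem_univ _, mul_pos hi0 (Real.exp_pos _)⟩
  have hexp : ∀ t : ℝ, φ (NormedSpace.exp ((t : ℂ) • X)) = ((F t : ℝ) : ℂ) := by
    intro t
    have hEe : ∀ i, (NormedSpace.exp ((t : ℂ) • X)) (e i)
        = Complex.exp ((t : ℂ) * (lam i : ℂ)) • e i := by
      intro i
      apply exp_apply_eigen
      rw [ContinuousLinearMap.smul_apply, hXe i, smul_smul]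
    rw [hφdiag _ _ hEe, hF]
    push_cast
    refine Finset.sum_congr rfl fun i _ => ?_
    rw [hpP i]
    push_cast [Complex.ofReal_exp]
    ring
  -- the remainder
  set ρ : ℝ → ℝ := fun t => Real.log (F t) - a * t - b * t ^ 2 / 2 with hρ
  refine ⟨fun t => ((ρ t : ℝ) : ℂ), ?_, ?_, ?_⟩
  · intro t
    rw [hexp t, hφX, hφX2]
    have harg : ((a : ℂ) * t + ((m2 : ℂ) - (a : ℂ) ^ 2) * t ^ 2 / 2 + ((ρ t : ℝ) : ℂ))
        = ((Real.log (F t) : ℝ) : ℂ) := by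
      rw [hρ]
      push_cast [hb]
      ring
    rw [harg, ← Complex.ofReal_exp, Real.exp_log (hFpos t)]
  · intro t ht
    rw [Complex.norm_real, Real.norm_eq_abs]
    have := mgf_taylor p lam ‖X‖ hpnn hsum1 hlamL t ht
    simpa [hρ, ha, hm2, hb] using this
  · intro h0
    have ha0 : a = 0 := by
      rw [hφX] at h0
      exact_mod_cast h0
    have hbm2 : b = m2 := by rw [hb, ha0]; ring
    set s : ℕ → ℝ := fun n => b / 2 + n * ρ ((Real.sqrt n)⁻¹) with hsdef
    have hLnn : (0:ℝ) ≤ ‖X‖ := norm_nonneg X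
    have hstend : Tendsto s atTop (𝓝 (b / 2)) := by
      have hz : Tendsto (fun n : ℕ => (n : ℝ) * ρ ((Real.sqrt n)⁻¹)) atTop (𝓝 0) := by
        have hbound : ∀ n : ℕ, ‖(n : ℝ) * ρ ((Real.sqrt n)⁻¹)‖
            ≤ (4 / 3) * ‖X‖ ^ 3 * (Real.sqrt n)⁻¹ := by
          intro n
          rcases Nat.eq_zero_or_pos n with hn0 | hn1
          · subst hn0
            simp
          · have hsq : (0:ℝ) < Real.sqrt n := Real.sqrt_pos.mpr (by positivity)
            have htn : (0:ℝ) ≤ (Real.sqrt n)⁻¹ := by positivity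
            have hbd := mgf_taylor p lam ‖X‖ hpnn hsum1 hlamL ((Real.sqrt n)⁻¹) htn
            have hbd' : |ρ ((Real.sqrt n)⁻¹)| ≤ 4 / 3 * ‖X‖ ^ 3 * ((Real.sqrt n)⁻¹) ^ 3 := by
              simpa [hρ, ha, hm2, hb] using hbd
            rw [Real.norm_eq_abs, abs_mul, Nat.abs_cast]
            calc (n : ℝ) * |ρ ((Real.sqrt n)⁻¹)|
                ≤ (n : ℝ) * (4 / 3 * ‖X‖ ^ 3 * ((Real.sqrt n)⁻¹) ^ 3) := by
                  exact mul_le_mul_of_nonneg_left hbd' (by positivity)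
              _ = 4 / 3 * ‖X‖ ^ 3 * (Real.sqrt n)⁻¹ := by
                  have h3 : (Real.sqrt n) ^ 2 = (n : ℝ) := Real.sq_sqrt (by positivity)
                  have haux : ∀ x : ℝ, x ≠ 0 → x ^ 2 * (x⁻¹) ^ 3 = x⁻¹ := by
                    intro x hx
                    field_simp
                  have key : (n : ℝ) * ((Real.sqrt n)⁻¹) ^ 3 = (Real.sqrt n)⁻¹ := by
                    have h4 := haux (Real.sqrt n) (ne_of_gt hsq)
                    calc (n : ℝ) * ((Real.sqrt n)⁻¹) ^ 3
                        = (Real.sqrt n) ^ 2 * ((Real.sqrt n)⁻¹) ^ 3 := by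
                          linear_combination (-(((Real.sqrt n)⁻¹) ^ 3)) * h3
                      _ = (Real.sqrt n)⁻¹ := h4
                  linear_combination (4 / 3 * ‖X‖ ^ 3) * key
        have htend : Tendsto (fun n : ℕ => (4 / 3) * ‖X‖ ^ 3 * (Real.sqrt n)⁻¹) atTop (𝓝 0) := by
          have hinv : Tendsto (fun n : ℕ => ((n : ℝ))⁻¹) atTop (𝓝 0) :=
            tendsto_inv_atTop_nhds_zero_nat
          have hsc : Tendsto (fun x : ℝ => Real.sqrt x) (𝓝 0) (𝓝 0) := by
            simpa using Real.continuous_sqrt.tendsto 0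
          have h2 : Tendsto (fun n : ℕ => (Real.sqrt n)⁻¹) atTop (𝓝 0) := by
            apply (hsc.comp hinv).congr
            intro n
            simp [Function.comp, Real.sqrt_inv]
          have := h2.const_mul ((4 / 3) * ‖X‖ ^ 3)
          simpa using this
        exact squeeze_zero_norm hbound htend
      have := hz.const_add (b / 2)
      simpa [hsdef] using this
    have heq : (fun n : ℕ => (φ (NormedSpace.exp ((((Real.sqrt n)⁻¹ : ℝ) : ℂ) • X))) ^ n)
        =ᶠ[atTop] fun n => Complex.exp ((s n : ℝ) : ℂ) := by
      filter_upwards [eventually_ge_atTop 1] with n hn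
      have hsq : (0:ℝ) < Real.sqrt n := Real.sqrt_pos.mpr (by positivity)
      rw [hexp ((Real.sqrt n)⁻¹)]
      have hFval : F ((Real.sqrt n)⁻¹)
          = Real.exp (a * (Real.sqrt n)⁻¹ + b * ((Real.sqrt n)⁻¹) ^ 2 / 2 + ρ ((Real.sqrt n)⁻¹)) := by
        rw [hρ]
        rw [show a * (Real.sqrt n)⁻¹ + b * ((Real.sqrt n)⁻¹) ^ 2 / 2 +
            (Real.log (F ((Real.sqrt n)⁻¹)) - a * (Real.sqrt n)⁻¹ -
              b * ((Real.sqrt n)⁻¹) ^ 2 / 2) = Real.log (F ((Real.sqrt n)⁻¹)) by ring]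
        rw [Real.exp_log (hFpos _)]
      have hn2 : ((Real.sqrt n)⁻¹) ^ 2 = (n : ℝ)⁻¹ := by
        rw [← Real.sq_sqrt (show (0:ℝ) ≤ n by positivity)]
        field_simp
        rw [Real.sqrt_sq hsq.le]
      have hnne : (n : ℝ) ≠ 0 := by positivity
      have hreal : F ((Real.sqrt n)⁻¹) ^ n = Real.exp (s n) := by
        rw [hFval, ← Real.exp_nat_mul]
        congr 1
        rw [hsdef, ha0]
        simp only [zero_mul, zero_add]
        rw [hn2]
        field_simp
      rw [← Complex.ofReal_pow, hreal, Complex.ofReal_exp]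
    have hcont : Tendsto (fun n : ℕ => Complex.exp ((s n : ℝ) : ℂ)) atTop
        (𝓝 (Complex.exp ((b / 2 : ℝ) : ℂ))) := by
      have hc : Continuous fun x : ℝ => Complex.exp ((x : ℝ) : ℂ) :=
        Complex.continuous_exp.comp Complex.continuous_ofReal
      exact (hc.tendsto (b / 2)).comp hstend
    have hgoal : Complex.exp (φ (X * X) / 2) = Complex.exp ((b / 2 : ℝ) : ℂ) := by
      rw [hφX2, hbm2]
      push_cast
      ring_nf
    rw [hgoal]
    exact Tendsto.congr' heq.symm hcont
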